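/- Let p and p̃ be design measures on the design points x_1, …, x_n ∈ ℝ^q with both H(p) and H(p̃) positive definite, and let t ∈ [0,1). Then for every 0 < ε < 1, log det H((1−ε)p + εp̃) ≥ (1−ε)·log det H(p) + ε·log det H(p̃); that is, the D-criterion φ_D(p) = log det H(p) is concave in the design measure p. -/

import Mathlib

open Matrix BigOperators Finset

noncomputable section

/-- A design measure: nonnegative masses summing to 1. -/
def designMeasure {n : ℕ} (p : Fin n → ℝ) : Prop :=
  (∀ i, 0 ≤ p i) ∧ ∑ i, p i = 1

/-- G(p) = Σ pᵢ xᵢ xᵢᵀ. -/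
def Gmat {q n : ℕ} (x : Fin n → Fin q → ℝ) (p : Fin n → ℝ) : Matrix (Fin q) (Fin q) ℝ :=
  ∑ i, p i • Matrix.vecMulVec (x i) (x i)

/-- g(p) = Σ pᵢ xᵢ. -/
def gvec {q n : ℕ} (x : Fin n → Fin q → ℝ) (p : Fin n → ℝ) : Fin q → ℝ :=
  ∑ i, p i • x i

/-- H(p) = G(p) − t g(p) g(p)ᵀ. -/
def Hmat {q n : ℕ} (t : ℝ) (x : Fin n → Fin q → ℝ) (p : Fin n → ℝ) : Matrix (Fin q) (Fin q) ℝ :=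
  Gmat x p - t • Matrix.vecMulVec (gvec x p) (gvec x p)

/-- ψ_{Di}(p). -/
def psiD {q n : ℕ} (t : ℝ) (x : Fin n → Fin q → ℝ) (p : Fin n → ℝ) (i : Fin n) : ℝ :=
  (1 - t) * (x i ⬝ᵥ ((Hmat t x p)⁻¹ *ᵥ x i))
    + t * ((x i - gvec x p) ⬝ᵥ ((Hmat t x p)⁻¹ *ᵥ (x i - gvec x p)))

/-- ψ_{Ai}(p). -/
def psiA {q n : ℕ} (t : ℝ) (x : Fin n → Fin q → ℝ) (p : Fin n → ℝ) (i : Fin n) : ℝ :=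
  (1 - t) * (x i ⬝ᵥ (((Hmat t x p)⁻¹ * (Hmat t x p)⁻¹) *ᵥ x i))
    + t * ((x i - gvec x p) ⬝ᵥ (((Hmat t x p)⁻¹ * (Hmat t x p)⁻¹) *ᵥ (x i - gvec x p)))

end

set_option linter.unusedSectionVars false
set_option linter.unusedVariables false
set_option maxHeartbeats 1000000

section AuxLemmas
open Real
variable {m : Type*} [Fintype m] [DecidableEq m]

lemma mySmulPSD {c : ℝ} {M : Matrix m m ℝ} (hc : 0 ≤ c) (hM : M.PosSemidef) :
    (c • M).PosSemidef := by
  refine .of_dotProduct_mulVec_nonneg ?_ (fun x => ?_)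
  · rw [Matrix.IsHermitian, conjTranspose_smul, star_trivial, hM.1.eq]
  · rw [smul_mulVec, dotProduct_smul, smul_eq_mul]
    exact mul_nonneg hc (hM.dotProduct_mulVec_nonneg x)

lemma mySmulPD {c : ℝ} {M : Matrix m m ℝ} (hc : 0 < c) (hM : M.PosDef) :
    (c • M).PosDef := by
  refine .of_dotProduct_mulVec_pos ?_ (fun x hx => ?_)
  · rw [Matrix.IsHermitian, conjTranspose_smul, star_trivial, hM.1.eq]
  · rw [smul_mulVec, dotProduct_smul, smul_eq_mul]
    exact mul_pos hc (hM.dotProduct_mulVec_pos hx)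

lemma myVecMulVecPSD (v : m → ℝ) : (Matrix.vecMulVec v v).PosSemidef := by
  refine .of_dotProduct_mulVec_nonneg ?_ (fun x => ?_)
  · ext i j
    simp [vecMulVec_apply, conjTranspose_apply, mul_comm]
  · have h : Matrix.vecMulVec v v *ᵥ x = (v ⬝ᵥ x) • v := by
      ext i
      simp only [Matrix.mulVec, vecMulVec_apply, dotProduct, Pi.smul_apply, smul_eq_mul,
        Finset.sum_mul, Finset.mul_sum]
      exact Finset.sum_congr rfl fun j _ => by ring
    rw [h, dotProduct_smul, smul_eq_mul, star_trivial]
    rw [dotProduct_comm]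
    exact mul_self_nonneg _

lemma myDetAffine {M : Matrix m m ℝ} (hM : M.IsHermitian) (a b : ℝ) :
    (a • (1 : Matrix m m ℝ) + b • M).det = ∏ i, (a + b * hM.eigenvalues i) := by
  set U : Matrix m m ℝ := (hM.eigenvectorUnitary : Matrix m m ℝ) with hU
  have hUU : U * star U = 1 := (Matrix.mem_unitaryGroup_iff).mp hM.eigenvectorUnitary.2
  have key : a • (1 : Matrix m m ℝ) + b • M
      = U * (Matrix.diagonal (fun i => a + b * hM.eigenvalues i)) * star U := by
    have hd : Matrix.diagonal (fun i => a + b * hM.eigenvalues i)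
        = a • (1 : Matrix m m ℝ) + b • Matrix.diagonal hM.eigenvalues := by
      rw [← Matrix.diagonal_one, ← Matrix.diagonal_smul, ← Matrix.diagonal_smul,
        Matrix.diagonal_add]
      congr 1
      ext i
      simp [mul_comm]
    rw [hd, Matrix.mul_add, Matrix.add_mul, mul_smul_comm, mul_smul_comm,
      smul_mul_assoc, smul_mul_assoc, Matrix.mul_one, hUU]
    congr 2
    have h2 := hM.spectral_theorem
    simp only [RCLike.ofReal_real_eq_id, Function.comp_id] at h2
    exact h2
  rw [key, Matrix.det_mul, Matrix.det_mul, Matrix.det_diagonal]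
  have : U.det * (star U).det = 1 := by rw [← Matrix.det_mul, hUU, Matrix.det_one]
  calc U.det * (∏ i, (a + b * hM.eigenvalues i)) * (star U).det
      = (U.det * (star U).det) * ∏ i, (a + b * hM.eigenvalues i) := by ring
    _ = ∏ i, (a + b * hM.eigenvalues i) := by rw [this, one_mul]

open scoped MatrixOrder in
lemma mySandwich {A : Matrix m m ℝ} (hA : A.PosDef) (B : Matrix m m ℝ) (hB : B.PosSemidef) :
    ∃ M : Matrix m m ℝ, M.PosSemidef ∧ (B.PosDef → M.PosDef) ∧ M.det * A.det = B.det ∧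
      ∀ a b : ℝ, (a • A + b • B).det = A.det * (a • (1 : Matrix m m ℝ) + b • M).det := by
  set S : Matrix m m ℝ := CFC.sqrt A with hSdef
  have hSS : S * S = A := CFC.sqrt_mul_sqrt_self A (Matrix.nonneg_iff_posSemidef.mpr hA.posSemidef)
  have hSH : S.IsHermitian := (Matrix.nonneg_iff_posSemidef.mp (CFC.sqrt_nonneg A)).1
  have hdetS : S.det * S.det = A.det := by rw [← Matrix.det_mul, hSS]
  have hdetSne : S.det ≠ 0 := by
    intro h
    have := hA.det_pos
    rw [← hdetS, h, mul_zero] at this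
    exact lt_irrefl _ this
  have hunit : IsUnit S.det := hdetSne.isUnit
  set T : Matrix m m ℝ := S⁻¹ with hTdef
  have hTS : T * S = 1 := Matrix.nonsing_inv_mul S hunit
  have hST : S * T = 1 := Matrix.mul_nonsing_inv S hunit
  have hTH : T.IsHermitian := hSH.inv
  refine ⟨T * B * T, ?_, ?_, ?_, ?_⟩
  · have := hB.conjTranspose_mul_mul_same T
    rwa [hTH.eq] at this
  · intro hBpd
    have hmain : (Tᴴ * B * T).PosDef := by
      refine .of_dotProduct_mulVec_pos (isHermitian_conjTranspose_mul_mul T hBpd.1) fun x hx => ?_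
      have hTx : T *ᵥ x ≠ 0 := by
        intro h
        apply hx
        have : S *ᵥ (T *ᵥ x) = x := by rw [Matrix.mulVec_mulVec, hST, Matrix.one_mulVec]
        rw [h, Matrix.mulVec_zero] at this
        exact this.symm
      simpa only [star_mulVec, dotProduct_mulVec, vecMul_vecMul] using hBpd.dotProduct_mulVec_pos hTx
    rwa [hTH.eq] at hmain
  · have hdetT : T.det = (S.det)⁻¹ := by rw [hTdef, Matrix.det_nonsing_inv, Ring.inverse_eq_inv]
    rw [Matrix.det_mul, Matrix.det_mul, hdetT, ← hdetS]
    field_simp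
  · intro a b
    have key : a • A + b • B = S * (a • (1 : Matrix m m ℝ) + b • (T * B * T)) * S := by
      rw [Matrix.mul_add, Matrix.add_mul, mul_smul_comm, mul_smul_comm,
        smul_mul_assoc, smul_mul_assoc, Matrix.mul_one, hSS]
      congr 1
      have : S * (T * B * T) * S = B := by
        rw [← Matrix.mul_assoc, ← Matrix.mul_assoc, hST, Matrix.one_mul,
          Matrix.mul_assoc, hTS, Matrix.mul_one]
      rw [this]
    rw [key, Matrix.det_mul, Matrix.det_mul]
    rw [← hdetS]
    ring

lemma myDetMono {A P : Matrix m m ℝ} (hA : A.PosDef) (hP : P.PosSemidef) :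
    A.det ≤ (A + P).det := by
  obtain ⟨M, hMpsd, -, -, hconj⟩ := mySandwich hA P hP
  rw [show A + P = (1:ℝ) • A + (1:ℝ) • P by simp, hconj 1 1, myDetAffine hMpsd.1 1 1]
  have h1 : (1:ℝ) ≤ ∏ i, (1 + 1 * hMpsd.1.eigenvalues i) := by
    calc (1:ℝ) = ∏ _i : m, (1:ℝ) := by simp
    _ ≤ ∏ i, (1 + 1 * hMpsd.1.eigenvalues i) := by
        refine Finset.prod_le_prod (fun i _ => zero_le_one) fun i _ => ?_
        have := hMpsd.eigenvalues_nonneg i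
        linarith
  nlinarith [hA.det_pos]

lemma myLogConcave {A B : Matrix m m ℝ} (hA : A.PosDef) (hB : B.PosDef)
    {a b : ℝ} (ha : 0 < a) (hb : 0 < b) (hab : a + b = 1) :
    a * Real.log A.det + b * Real.log B.det ≤ Real.log ((a • A + b • B).det) := by
  obtain ⟨M, hMpsd, hMpd', hdet, hconj⟩ := mySandwich hA B hB.posSemidef
  have hMpd := hMpd' hB
  set μ : m → ℝ := hMpsd.1.eigenvalues with hμ
  have hμpos : ∀ i, 0 < μ i := fun i => hMpd.eigenvalues_pos i
  have hterm : ∀ i, 0 < a + b * μ i := fun i =>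
    add_pos ha (mul_pos hb (hμpos i))
  have hlogterm : ∀ i, b * Real.log (μ i) ≤ Real.log (a + b * μ i) := by
    intro i
    have := (strictConcaveOn_log_Ioi.concaveOn).2 (Set.mem_Ioi.mpr one_pos)
      (Set.mem_Ioi.mpr (hμpos i)) ha.le hb.le hab
    simpa [Real.log_one] using this
  have hdetM : M.det = B.det / A.det := by
    field_simp [hA.det_pos.ne']
    linarith [hdet]
  have hlogM : Real.log M.det = Real.log B.det - Real.log A.det := by
    rw [hdetM, Real.log_div hB.det_pos.ne' hA.det_pos.ne']
  have hMdet : M.det = ∏ i, μ i := by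
    have := hMpsd.1.det_eq_prod_eigenvalues
    simpa [RCLike.ofReal_real_eq_id] using this
  have hlogM2 : Real.log M.det = ∑ i, Real.log (μ i) := by
    rw [hMdet, Real.log_prod fun i _ => (hμpos i).ne']
  rw [hconj a b, myDetAffine hMpsd.1 a b,
    Real.log_mul hA.det_pos.ne' (Finset.prod_pos (fun i _ => hterm i)).ne',
    Real.log_prod fun i _ => (hterm i).ne']
  have hsum : b * ∑ i, Real.log (μ i) ≤ ∑ i, Real.log (a + b * μ i) := by
    rw [Finset.mul_sum]
    exact Finset.sum_le_sum fun i _ => hlogterm i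
  have : b * Real.log M.det ≤ ∑ i, Real.log (a + b * μ i) := by rw [hlogM2]; exact hsum
  rw [hlogM] at this
  have ha' : a = 1 - b := by linarith
  subst ha'
  nlinarith

end AuxLemmas

section MixLemmas
variable {q n : ℕ} (x : Fin n → Fin q → ℝ) (p ptilde : Fin n → ℝ) (ε : ℝ)

lemma gvec_mix (a : Fin q) :
    gvec x ((1 - ε) • p + ε • ptilde) a
      = (1 - ε) * gvec x p a + ε * gvec x ptilde a := by
  unfold gvec
  simp only [Finset.sum_apply, Pi.add_apply, Pi.smul_apply, smul_eq_mul, Finset.mul_sum,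
    ← Finset.sum_add_distrib]
  exact Finset.sum_congr rfl fun k _ => by ring

lemma Gmat_mix (a b : Fin q) :
    Gmat x ((1 - ε) • p + ε • ptilde) a b
      = (1 - ε) * Gmat x p a b + ε * Gmat x ptilde a b := by
  unfold Gmat
  simp only [Matrix.sum_apply, Matrix.smul_apply, Pi.add_apply, Pi.smul_apply, smul_eq_mul,
    Finset.mul_sum, ← Finset.sum_add_distrib]
  exact Finset.sum_congr rfl fun k _ => by ring

lemma Hmat_mix (t : ℝ) :
    Hmat t x ((1 - ε) • p + ε • ptilde)
      = ((1 - ε) • Hmat t x p + ε • Hmat t x ptilde)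
        + (ε * (1 - ε) * t) • Matrix.vecMulVec
            (gvec x p - gvec x ptilde) (gvec x p - gvec x ptilde) := by
  ext a b
  simp only [Hmat, Matrix.add_apply, Matrix.sub_apply, Matrix.smul_apply, vecMulVec_apply,
    Pi.sub_apply, smul_eq_mul, gvec_mix, Gmat_mix]
  ring

end MixLemmas

theorem statement_1 {q n : ℕ} (hq : 1 ≤ q) (hn : 1 ≤ n)
    (x : Fin n → Fin q → ℝ) (t : ℝ) (ht0 : 0 ≤ t) (ht1 : t < 1)
    (p ptilde : Fin n → ℝ) (hp : designMeasure p) (hpt : designMeasure ptilde)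
    (hHp : (Hmat t x p).PosDef) (hHpt : (Hmat t x ptilde).PosDef)
    (ε : ℝ) (hε0 : 0 < ε) (hε1 : ε < 1) :
    Real.log (Hmat t x ((1 - ε) • p + ε • ptilde)).det
      ≥ (1 - ε) * Real.log (Hmat t x p).det + ε * Real.log (Hmat t x ptilde).det := by
  have h1ε : 0 < 1 - ε := by linarith
  set C : Matrix (Fin q) (Fin q) ℝ := (1 - ε) • Hmat t x p + ε • Hmat t x ptilde with hC
  set P : Matrix (Fin q) (Fin q) ℝ := (ε * (1 - ε) * t) • Matrix.vecMulVec
      (gvec x p - gvec x ptilde) (gvec x p - gvec x ptilde) with hP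
  have hCpd : C.PosDef := (mySmulPD h1ε hHp).add (mySmulPD hε0 hHpt)
  have hPpsd : P.PosSemidef := mySmulPSD (by positivity) (myVecMulVecPSD _)
  rw [Hmat_mix x p ptilde ε t]
  have hmono : C.det ≤ (C + P).det := myDetMono hCpd hPpsd
  have hlog : Real.log C.det ≤ Real.log ((C + P).det) :=
    Real.log_le_log hCpd.det_pos hmono
  have hconc := myLogConcave hHp hHpt h1ε hε0 (by ring)
  calc (1 - ε) * Real.log (Hmat t x p).det + ε * Real.log (Hmat t x ptilde).det
      ≤ Real.log C.det := hconc
    _ ≤ Real.log ((C + P).det) := hlog
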